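/- arXiv:1710.07039 — 3 statements merged into one kernel-verified Lean document; each statement's English description precedes it below -/
import Mathlib

section
/- Let V be a finite set, RR : 𝒫(V) → ℝ_{>0} with RR(∅) = 1, and α(D) = Σ_{D' ⊆ D} (-1)^{|D \ D'|} log RR(D'). Define MCE(D) = Π_{D' ⊊ D} exp(α(D')). Then for every D ⊆ V, MCE(D) = ( Π_{D' ⊊ D} RR(D')^{(-1)^{|D \ D'|}} )^{-1}. -/
open Finset Real

private lemma mobius_sum_aux {α : Type*} [DecidableEq α] (f : Finset α → ℝ) (D : Finset α) :
    ∑ D' ∈ D.powerset, ∑ D'' ∈ D'.powerset, (-1 : ℝ) ^ ((D' \ D'').card) * f D'' = f D := by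
  classical
  rw [Finset.sum_comm' (s' := fun D'' => D.powerset.filter (fun D' => D'' ⊆ D'))
      (t' := D.powerset)
      (fun D' D'' => by
        simp only [mem_powerset, mem_filter]
        constructor
        · rintro ⟨h1, h2⟩; exact ⟨⟨h1, h2⟩, h2.trans h1⟩
        · rintro ⟨⟨h1, h2⟩, _⟩; exact ⟨h1, h2⟩)]
  have hsign : ∀ D'' ∈ D.powerset,
      (∑ D' ∈ D.powerset.filter (fun D' => D'' ⊆ D'), (-1 : ℝ) ^ ((D' \ D'').card))
        = if D'' = D then 1 else 0 := by
    intro D'' hD''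
    rw [mem_powerset] at hD''
    have hre : (∑ D' ∈ D.powerset.filter (fun D' => D'' ⊆ D'), (-1 : ℝ) ^ ((D' \ D'').card))
        = ∑ E ∈ (D \ D'').powerset, (-1 : ℝ) ^ E.card := by
      refine Finset.sum_nbij' (i := fun D' => D' \ D'') (j := fun E => D'' ∪ E) ?_ ?_ ?_ ?_ ?_
      · intro a ha
        simp only [mem_filter, mem_powerset] at ha ⊢
        exact sdiff_subset_sdiff ha.1 (Finset.Subset.refl _)
      · intro b hb
        simp only [mem_powerset] at hb
        simp only [mem_filter, mem_powerset]
        exact ⟨union_subset hD'' (hb.trans (sdiff_subset)), subset_union_left⟩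
      · intro a ha
        simp only [mem_filter, mem_powerset] at ha
        exact union_sdiff_of_subset ha.2
      · intro b hb
        simp only [mem_powerset] at hb
        have hd : Disjoint D'' b := Finset.disjoint_sdiff.mono_right hb
        show (D'' ∪ b) \ D'' = b
        exact union_sdiff_cancel_left hd
      · intro a _; rfl
    rw [hre]
    have hz := Finset.sum_powerset_neg_one_pow_card (x := D \ D'')
    have : (∑ E ∈ (D \ D'').powerset, (-1 : ℝ) ^ E.card)
        = ((∑ E ∈ (D \ D'').powerset, (-1 : ℤ) ^ E.card : ℤ) : ℝ) := by push_cast; rfl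
    rw [this, hz]
    by_cases h : D'' = D
    · simp [h]
    · have : D \ D'' ≠ ∅ := by
        intro hc
        exact h (Finset.Subset.antisymm hD'' (sdiff_eq_empty_iff_subset.mp hc))
      simp [this, h]
  calc ∑ D'' ∈ D.powerset, ∑ D' ∈ D.powerset.filter (fun D' => D'' ⊆ D'),
        (-1 : ℝ) ^ ((D' \ D'').card) * f D''
      = ∑ D'' ∈ D.powerset, (if D'' = D then 1 else 0) * f D'' := by
        refine Finset.sum_congr rfl fun D'' hD'' => ?_
        rw [← Finset.sum_mul, hsign D'' hD'']
    _ = f D := by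
        simp [ite_mul, Finset.sum_ite_eq' D.powerset D f,
          Finset.mem_powerset_self]

theorem lemma2_marginal_causal_effect
    {α : Type*} [DecidableEq α] (V : Finset α)
    (RR : Finset α → ℝ) (hpos : ∀ D, 0 < RR D) (hempty : RR ∅ = 1)
    (a : Finset α → ℝ)
    (ha : ∀ D, a D = ∑ D' ∈ D.powerset, (-1 : ℝ) ^ ((D \ D').card) * Real.log (RR D'))
    (MCE : Finset α → ℝ)
    (hMCE : ∀ D, MCE D = ∏ D' ∈ D.powerset.erase D, Real.exp (a D')) :
    ∀ D ⊆ V, MCE D = (∏ D' ∈ D.powerset.erase D, RR D' ^ ((-1 : ℤ) ^ ((D \ D').card)))⁻¹ := by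
  intro D _
  set S : Finset (Finset α) := D.powerset.erase D with hS
  have hmem : D ∈ D.powerset := Finset.mem_powerset_self D
  -- sum over full powerset of a
  have hfull : ∑ D' ∈ D.powerset, a D' = Real.log (RR D) := by
    calc ∑ D' ∈ D.powerset, a D'
        = ∑ D' ∈ D.powerset, ∑ D'' ∈ D'.powerset,
            (-1 : ℝ) ^ ((D' \ D'').card) * Real.log (RR D'') :=
          Finset.sum_congr rfl fun D' _ => ha D'
      _ = Real.log (RR D) := mobius_sum_aux (fun s => Real.log (RR s)) D
  have hsplit : ∑ D' ∈ D.powerset, a D' = a D + ∑ D' ∈ S, a D' :=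
    (Finset.add_sum_erase _ _ hmem).symm
  have haD : a D = Real.log (RR D) + ∑ D' ∈ S, (-1 : ℝ) ^ ((D \ D').card) * Real.log (RR D') := by
    have h2 := Finset.add_sum_erase D.powerset
      (fun x => (-1 : ℝ) ^ ((D \ x).card) * Real.log (RR x)) hmem
    simp only [sdiff_self, Finset.card_empty, pow_zero, one_mul] at h2
    rw [ha D, ← h2]
    simp [hS]
  have hkey : ∑ D' ∈ S, a D' = -∑ D' ∈ S, (-1 : ℝ) ^ ((D \ D').card) * Real.log (RR D') := by
    have := hfull
    rw [hsplit, haD] at this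
    linarith
  have hL : MCE D = Real.exp (∑ D' ∈ S, a D') := by
    rw [hMCE D, ← Real.exp_sum]
  have hR : (∏ D' ∈ S, RR D' ^ ((-1 : ℤ) ^ ((D \ D').card)))
      = Real.exp (∑ D' ∈ S, (-1 : ℝ) ^ ((D \ D').card) * Real.log (RR D')) := by
    rw [Real.exp_sum]
    refine Finset.prod_congr rfl fun D' _ => ?_
    have h1 : RR D' ^ ((-1 : ℤ) ^ ((D \ D').card))
        = RR D' ^ ((((-1 : ℤ) ^ ((D \ D').card) : ℤ) : ℝ)) := by
      rw [Real.rpow_intCast]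
    rw [h1, Real.rpow_def_of_pos (hpos D')]
    push_cast
    ring_nf
  rw [hL, hkey, hR, ← Real.exp_neg]
end

section
/- Let (Y_v)_{v ∈ V} be {0,1}-valued random variables with joint-success probabilities μ(D) = P(∀ v ∈ D, Y_v = 1) > 0 for all D ⊆ V (μ(∅) = 1), and define the log-mean linear interaction γ(D) = Σ_{D' ⊆ D} (-1)^{|D \ D'|} log μ(D'). If there is a partition of V into nonempty disjoint sets A and B such that the vectors (Y_v)_{v ∈ A} and (Y_v)_{v ∈ B} are independent, then γ(D) = 0 for every D ⊆ V that intersects both A and B. -/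
open MeasureTheory ProbabilityTheory Finset Real

private lemma zsum {ι : Type*} [DecidableEq ι] (x : Finset ι) (hx : x.Nonempty) :
    ∑ m ∈ x.powerset, (-1 : ℝ) ^ (x \ m).card = 0 := by
  have h1 : ∑ m ∈ x.powerset, (-1 : ℝ) ^ (x \ m).card
      = ∑ m ∈ x.powerset, (-1 : ℝ) ^ m.card := by
    refine Finset.sum_nbij' (fun m => x \ m) (fun m => x \ m) ?_ ?_ ?_ ?_ ?_
    · intro a ha; exact Finset.mem_powerset.2 Finset.sdiff_subset
    · intro a ha; exact Finset.mem_powerset.2 Finset.sdiff_subset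
    · intro a ha; exact Finset.sdiff_sdiff_eq_self (Finset.mem_powerset.1 ha)
    · intro a ha; exact Finset.sdiff_sdiff_eq_self (Finset.mem_powerset.1 ha)
    · intro a ha; rfl
  rw [h1]
  have h2 := Finset.sum_powerset_neg_one_pow_card_of_nonempty hx
  calc ∑ m ∈ x.powerset, (-1 : ℝ) ^ m.card
      = ((∑ m ∈ x.powerset, (-1 : ℤ) ^ m.card : ℤ) : ℝ) := by push_cast; rfl
    _ = 0 := by rw [h2]; norm_num

private lemma powerset_union_sum {ι : Type*} [DecidableEq ι] (s t : Finset ι)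
    (hst : Disjoint s t) (g : Finset ι → ℝ) :
    ∑ D' ∈ (s ∪ t).powerset, g D'
      = ∑ p ∈ s.powerset ×ˢ t.powerset, g (p.1 ∪ p.2) := by
  have key : ∀ D' ⊆ s ∪ t, (D' ∩ s) ∪ (D' ∩ t) = D' := by
    intro D' h
    rw [← Finset.inter_union_distrib_left, Finset.inter_eq_left.2 h]
  refine Finset.sum_nbij' (fun D' => (D' ∩ s, D' ∩ t)) (fun p => p.1 ∪ p.2) ?_ ?_ ?_ ?_ ?_
  · intro a ha
    simp only [Finset.mem_product, Finset.mem_powerset]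
    exact ⟨Finset.inter_subset_right, Finset.inter_subset_right⟩
  · intro p hp
    simp only [Finset.mem_product, Finset.mem_powerset] at hp ⊢
    exact Finset.union_subset_union hp.1 hp.2
  · intro a ha; exact key a (Finset.mem_powerset.1 ha)
  · intro p hp
    simp only [Finset.mem_product, Finset.mem_powerset] at hp
    have h1 : (p.1 ∪ p.2) ∩ s = p.1 := by
      rw [Finset.union_inter_distrib_right, Finset.inter_eq_left.2 hp.1,
        Finset.disjoint_iff_inter_eq_empty.1 (Finset.disjoint_of_subset_left hp.2 hst.symm), Finset.union_empty]
    have h2 : (p.1 ∪ p.2) ∩ t = p.2 := by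
      rw [Finset.union_inter_distrib_right, Finset.inter_eq_left.2 hp.2,
        Finset.disjoint_iff_inter_eq_empty.1 (Finset.disjoint_of_subset_left hp.1 hst), Finset.empty_union]
    exact Prod.ext h1 h2
  · intro a ha; rw [key a (Finset.mem_powerset.1 ha)]

theorem gamma_vanishes_of_independent_blocks
    {Ω : Type*} {ι : Type*} [DecidableEq ι] [MeasurableSpace Ω]
    (P : Measure Ω) [IsProbabilityMeasure P]
    (Y : ι → Ω → ℕ)
    (hbin : ∀ v ω, Y v ω = 0 ∨ Y v ω = 1)
    (hmeas : ∀ v, Measurable (Y v))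
    (V : Finset ι)
    (μ : Finset ι → ℝ)
    (hμ : ∀ D, μ D = (P {ω | ∀ v ∈ D, Y v ω = 1}).toReal)
    (hpos : ∀ D ⊆ V, 0 < μ D)
    (γ : Finset ι → ℝ)
    (hγ : ∀ D, γ D = ∑ D' ∈ D.powerset, (-1 : ℝ) ^ ((D \ D').card) * Real.log (μ D'))
    (A B : Finset ι) (hA : A.Nonempty) (hB : B.Nonempty)
    (hdisj : Disjoint A B) (hunion : A ∪ B = V)
    (hindep : IndepFun (fun ω => fun a : {v // v ∈ A} => Y a.1 ω)
      (fun ω => fun b : {v // v ∈ B} => Y b.1 ω) P) :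
    ∀ D ⊆ V, (D ∩ A).Nonempty → (D ∩ B).Nonempty → γ D = 0 := by
  intro D hD hDA hDB
  classical
  have hTmeas : ∀ (C : Finset ι) (E : Finset ι),
      MeasurableSet {x : {v // v ∈ C} → ℕ | ∀ a : {v // v ∈ C}, (a : ι) ∈ E → x a = 1} := by
    intro C E
    have hrw : {x : {v // v ∈ C} → ℕ | ∀ a : {v // v ∈ C}, (a : ι) ∈ E → x a = 1}
        = ⋂ (a : {v // v ∈ C}), ⋂ (_ : (a : ι) ∈ E), (fun x => x a) ⁻¹' {1} := by
      ext x; simp [Set.mem_iInter]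
    rw [hrw]
    exact MeasurableSet.iInter fun a => MeasurableSet.iInter fun _ =>
      measurable_pi_apply a (measurableSet_singleton 1)
  have key : ∀ E F : Finset ι, E ⊆ A → F ⊆ B → μ (E ∪ F) = μ E * μ F := by
    intro E F hE hF
    have hSE : {ω | ∀ v ∈ E, Y v ω = 1}
        = (fun ω => fun a : {v // v ∈ A} => Y a.1 ω) ⁻¹'
          {x | ∀ a : {v // v ∈ A}, (a : ι) ∈ E → x a = 1} := by
      ext ω
      simp only [Set.mem_setOf_eq, Set.mem_preimage]
      exact ⟨fun h a ha => h a ha, fun h v hv => h ⟨v, hE hv⟩ hv⟩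
    have hSF : {ω | ∀ v ∈ F, Y v ω = 1}
        = (fun ω => fun b : {v // v ∈ B} => Y b.1 ω) ⁻¹'
          {x | ∀ b : {v // v ∈ B}, (b : ι) ∈ F → x b = 1} := by
      ext ω
      simp only [Set.mem_setOf_eq, Set.mem_preimage]
      exact ⟨fun h b hb => h b hb, fun h v hv => h ⟨v, hF hv⟩ hv⟩
    have hSEF : {ω | ∀ v ∈ E ∪ F, Y v ω = 1}
        = {ω | ∀ v ∈ E, Y v ω = 1} ∩ {ω | ∀ v ∈ F, Y v ω = 1} := by
      ext ω
      simp only [Set.mem_setOf_eq, Set.mem_inter_iff, Finset.mem_union]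
      constructor
      · intro h; exact ⟨fun v hv => h v (Or.inl hv), fun v hv => h v (Or.inr hv)⟩
      · rintro ⟨h1, h2⟩ v (hv | hv)
        exacts [h1 v hv, h2 v hv]
    rw [hμ, hμ, hμ, hSEF, hSE, hSF,
      hindep.measure_inter_preimage_eq_mul _ _ (hTmeas A E) (hTmeas B F), ENNReal.toReal_mul]
  set s := D ∩ A with hs
  set t := D ∩ B with ht
  have hst : Disjoint s t :=
    hdisj.mono Finset.inter_subset_right Finset.inter_subset_right
  have hDst : D = s ∪ t := by
    rw [hs, ht, ← Finset.inter_union_distrib_left, hunion, Finset.inter_eq_left.2 hD]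
  have hsA : s ⊆ A := Finset.inter_subset_right
  have htB : t ⊆ B := Finset.inter_subset_right
  have hAV : A ⊆ V := hunion ▸ Finset.subset_union_left
  have hBV : B ⊆ V := hunion ▸ Finset.subset_union_right
  have hlog : ∀ E F : Finset ι, E ⊆ s → F ⊆ t →
      Real.log (μ (E ∪ F)) = Real.log (μ E) + Real.log (μ F) := by
    intro E F hE hF
    rw [key E F (hE.trans hsA) (hF.trans htB)]
    exact Real.log_mul (ne_of_gt (hpos E ((hE.trans hsA).trans hAV)))
      (ne_of_gt (hpos F ((hF.trans htB).trans hBV)))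
  have hsd : ∀ E F : Finset ι, E ⊆ s → F ⊆ t →
      ((s ∪ t) \ (E ∪ F)).card = (s \ E).card + (t \ F).card := by
    intro E F hE hF
    have h1 : s \ (E ∪ F) = s \ E := by
      ext v
      simp only [Finset.mem_sdiff, Finset.mem_union, not_or]
      exact ⟨fun ⟨hv, h1, _⟩ => ⟨hv, h1⟩,
        fun ⟨hv, h1⟩ => ⟨hv, h1, fun hvF => (Finset.disjoint_left.1 hst hv) (hF hvF)⟩⟩
    have h2 : t \ (E ∪ F) = t \ F := by
      ext v
      simp only [Finset.mem_sdiff, Finset.mem_union, not_or]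
      exact ⟨fun ⟨hv, _, h2⟩ => ⟨hv, h2⟩,
        fun ⟨hv, h2⟩ => ⟨hv, fun hvE => (Finset.disjoint_right.1 hst hv) (hE hvE), h2⟩⟩
    rw [Finset.union_sdiff_distrib, h1, h2,
      Finset.card_union_of_disjoint (hst.mono Finset.sdiff_subset Finset.sdiff_subset)]
  rw [hγ, hDst, powerset_union_sum s t hst, Finset.sum_product]
  calc ∑ E ∈ s.powerset, ∑ F ∈ t.powerset,
        (-1 : ℝ) ^ (((s ∪ t) \ (E ∪ F)).card) * Real.log (μ (E ∪ F))
      = ∑ E ∈ s.powerset,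
          ((-1 : ℝ) ^ ((s \ E).card) * Real.log (μ E)
              * ∑ F ∈ t.powerset, (-1 : ℝ) ^ ((t \ F).card)
            + (-1 : ℝ) ^ ((s \ E).card)
              * ∑ F ∈ t.powerset, ((-1 : ℝ) ^ ((t \ F).card) * Real.log (μ F))) := by
        refine Finset.sum_congr rfl fun E hE => ?_
        rw [Finset.mul_sum, Finset.mul_sum, ← Finset.sum_add_distrib]
        refine Finset.sum_congr rfl fun F hF => ?_
        rw [hsd E F (Finset.mem_powerset.1 hE) (Finset.mem_powerset.1 hF),
          hlog E F (Finset.mem_powerset.1 hE) (Finset.mem_powerset.1 hF), pow_add]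
        ring
    _ = (∑ E ∈ s.powerset, (-1 : ℝ) ^ ((s \ E).card) * Real.log (μ E))
          * (∑ F ∈ t.powerset, (-1 : ℝ) ^ ((t \ F).card))
        + (∑ E ∈ s.powerset, (-1 : ℝ) ^ ((s \ E).card))
          * (∑ F ∈ t.powerset, (-1 : ℝ) ^ ((t \ F).card) * Real.log (μ F)) := by
        rw [Finset.sum_add_distrib, ← Finset.sum_mul, ← Finset.sum_mul]
    _ = 0 := by rw [zsum s hDA, zsum t hDB]; ring
end

section
/- (Corollary 3 of the paper.) Let μ₀, μ₁ : 𝒫(V) → ℝ_{>0} with μ_w(∅) = 1, and suppose for each w ∈ {0,1} there is a common partition of a set D ⊆ V into nonempty disjoint A, B with μ_w(D') = μ_w(D' ∩ A) · μ_w(D' ∩ B) for all D' ⊆ D. Define RR(D') = μ₁(D')/μ₀(D'), α(E) = Σ_{E' ⊆ E} (-1)^{|E \ E'|} log RR(E'), and MCE(D) = Π_{D' ⊊ D} exp(α(D')). Then RR(D) = MCE(D). -/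
open Finset Real

/-- The alternating sum of `(-1)^(B \ T).card` over subsets of a nonempty set is zero. -/
lemma aux_sum_neg_one_sdiff {α : Type*} [DecidableEq α] (B : Finset α) (hB : B.Nonempty) :
    ∑ T ∈ B.powerset, (-1 : ℝ) ^ ((B \ T).card) = 0 := by
  have h1 : ∑ T ∈ B.powerset, (-1 : ℝ) ^ ((B \ T).card)
      = ∑ T ∈ B.powerset, (-1 : ℝ) ^ T.card := by
    refine Finset.sum_nbij' (fun T => B \ T) (fun T => B \ T) ?_ ?_ ?_ ?_ ?_ <;>
      simp (config := { contextual := true }) [Finset.mem_powerset, Finset.sdiff_subset,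
        Finset.sdiff_sdiff_eq_self]
  rw [h1]
  have h2 := Finset.sum_powerset_neg_one_pow_card_of_nonempty (x := B) hB
  exact_mod_cast congrArg (fun z : ℤ => (z : ℝ)) h2

/-- Möbius inversion over the subset lattice. -/
lemma aux_mobius {α : Type*} [DecidableEq α] (f : Finset α → ℝ) (E : Finset α) :
    ∑ E' ∈ E.powerset, ∑ E'' ∈ E'.powerset, (-1 : ℝ) ^ ((E' \ E'').card) * f E'' = f E := by
  rw [Finset.sum_comm' (s := E.powerset) (t := fun E' => E'.powerset)
    (t' := E.powerset) (s' := fun E'' => E.powerset.filter (fun E' => E'' ⊆ E'))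
    (by
      intro x y
      simp only [Finset.mem_powerset, Finset.mem_filter]
      constructor
      · rintro ⟨h1, h2⟩; exact ⟨⟨h1, h2⟩, h2.trans h1⟩
      · rintro ⟨⟨h1, h2⟩, h3⟩; exact ⟨h1, h2⟩)]
  have key : ∀ E'' ∈ E.powerset,
      (∑ E' ∈ E.powerset.filter (fun E' => E'' ⊆ E'), (-1 : ℝ) ^ ((E' \ E'').card) * f E'')
      = (if E'' = E then (1 : ℝ) else 0) * f E'' := by
    intro E'' hE''
    rw [Finset.mem_powerset] at hE''
    rw [← Finset.sum_mul]
    congr 1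
    have hbij : ∑ E' ∈ E.powerset.filter (fun E' => E'' ⊆ E'), (-1 : ℝ) ^ ((E' \ E'').card)
        = ∑ S ∈ (E \ E'').powerset, (-1 : ℝ) ^ S.card := by
      refine Finset.sum_nbij' (fun E' => E' \ E'') (fun S => E'' ∪ S) ?_ ?_ ?_ ?_ ?_
      · intro E' hE'
        simp only [Finset.mem_filter, Finset.mem_powerset] at hE' ⊢
        exact sdiff_subset_sdiff hE'.1 le_rfl
      · intro S hS
        simp only [Finset.mem_powerset] at hS
        simp only [Finset.mem_filter, Finset.mem_powerset]
        exact ⟨Finset.union_subset hE'' (hS.trans (Finset.sdiff_subset)),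
          Finset.subset_union_left⟩
      · intro E' hE'
        simp only [Finset.mem_filter, Finset.mem_powerset] at hE'
        exact Finset.union_sdiff_of_subset hE'.2
      · intro S hS
        simp only [Finset.mem_powerset] at hS
        show (E'' ∪ S) \ E'' = S
        rw [Finset.union_sdiff_left]
        exact Finset.sdiff_eq_self_of_disjoint
          (Finset.disjoint_left.mpr fun x hx hx' => (Finset.mem_sdiff.mp (hS hx)).2 hx')
      · intro E' _; rfl
    rw [hbij]
    have h2 := Finset.sum_powerset_neg_one_pow_card (x := E \ E'')
    have h3 : (((∑ m ∈ (E \ E'').powerset, (-1 : ℤ) ^ m.card) : ℤ) : ℝ)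
        = ∑ S ∈ (E \ E'').powerset, (-1 : ℝ) ^ S.card := by push_cast; rfl
    rw [← h3, h2]
    by_cases h : E'' = E
    · simp [h]
    · have : E \ E'' ≠ ∅ := by
        rw [← Finset.nonempty_iff_ne_empty]
        exact Finset.sdiff_nonempty.mpr fun hc => h (le_antisymm hE'' hc)
      simp [this, h]
  rw [Finset.sum_congr rfl key]
  simp [ite_mul, Finset.sum_ite_eq']

/-- The top coefficient vanishes for an additively separable function. -/
lemma aux_alpha_zero {α : Type*} [DecidableEq α] (A B : Finset α)
    (hA : A.Nonempty) (hB : B.Nonempty) (hdisj : Disjoint A B) (g h : Finset α → ℝ) :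
    ∑ E' ∈ (A ∪ B).powerset,
      (-1 : ℝ) ^ (((A ∪ B) \ E').card) * (g (E' ∩ A) + h (E' ∩ B)) = 0 := by
  have key : ∑ E' ∈ (A ∪ B).powerset,
      (-1 : ℝ) ^ (((A ∪ B) \ E').card) * (g (E' ∩ A) + h (E' ∩ B))
      = ∑ p ∈ A.powerset ×ˢ B.powerset,
        ((-1 : ℝ) ^ ((A \ p.1).card) * (-1 : ℝ) ^ ((B \ p.2).card)) * (g p.1 + h p.2) := by
    refine Finset.sum_nbij' (fun E' => (E' ∩ A, E' ∩ B)) (fun p => p.1 ∪ p.2) ?_ ?_ ?_ ?_ ?_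
    · intro E' _
      simp [Finset.mem_product, Finset.inter_subset_right]
    · intro p hp
      simp only [Finset.mem_product, Finset.mem_powerset] at hp ⊢
      exact Finset.union_subset_union hp.1 hp.2
    · intro E' hE'
      simp only [Finset.mem_powerset] at hE'
      show E' ∩ A ∪ E' ∩ B = E'
      rw [← Finset.inter_union_distrib_left]
      exact Finset.inter_eq_left.mpr hE'
    · intro p hp
      simp only [Finset.mem_product, Finset.mem_powerset] at hp
      have h1 : (p.1 ∪ p.2) ∩ A = p.1 := by
        rw [Finset.union_inter_distrib_right, Finset.inter_eq_left.mpr hp.1,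
          Finset.disjoint_iff_inter_eq_empty.mp (hdisj.symm.mono_left hp.2),
          Finset.union_empty]
      have h2 : (p.1 ∪ p.2) ∩ B = p.2 := by
        rw [Finset.union_inter_distrib_right, Finset.inter_eq_left.mpr hp.2,
          Finset.disjoint_iff_inter_eq_empty.mp (hdisj.mono_left hp.1),
          Finset.empty_union]
      exact Prod.ext h1 h2
    · intro E' hE'
      simp only [Finset.mem_powerset] at hE'
      have hsd : (A ∪ B) \ E' = (A \ (E' ∩ A)) ∪ (B \ (E' ∩ B)) := by
        ext x
        simp only [Finset.mem_sdiff, Finset.mem_union, Finset.mem_inter]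
        tauto
      have hdisj2 : Disjoint (A \ (E' ∩ A)) (B \ (E' ∩ B)) :=
        (hdisj.mono Finset.sdiff_subset Finset.sdiff_subset)
      rw [hsd, Finset.card_union_of_disjoint hdisj2, pow_add]
  rw [key, Finset.sum_product]
  have expand : ∀ S ∈ A.powerset,
      (∑ T ∈ B.powerset, ((-1 : ℝ) ^ ((A \ S).card) * (-1 : ℝ) ^ ((B \ T).card)) * (g S + h T))
      = (-1 : ℝ) ^ ((A \ S).card) * g S * (∑ T ∈ B.powerset, (-1 : ℝ) ^ ((B \ T).card))
        + (-1 : ℝ) ^ ((A \ S).card) * (∑ T ∈ B.powerset, (-1 : ℝ) ^ ((B \ T).card) * h T) := by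
    intro S _
    rw [Finset.mul_sum, Finset.mul_sum, ← Finset.sum_add_distrib]
    congr 1; ext T; ring
  rw [Finset.sum_congr rfl expand]
  rw [aux_sum_neg_one_sdiff B hB]
  simp only [mul_zero, zero_add]
  rw [← Finset.sum_mul]
  have : ∑ S ∈ A.powerset, (-1 : ℝ) ^ ((A \ S).card) = 0 := aux_sum_neg_one_sdiff A hA
  rw [this, zero_mul]

theorem corollary3_RR_eq_MCE_of_independence
    {α : Type*} [DecidableEq α] (V : Finset α)
    (μ₀ μ₁ : Finset α → ℝ)
    (hpos₀ : ∀ E, 0 < μ₀ E) (hpos₁ : ∀ E, 0 < μ₁ E)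
    (hempty₀ : μ₀ ∅ = 1) (hempty₁ : μ₁ ∅ = 1)
    (D : Finset α) (hD : D ⊆ V)
    (A B : Finset α) (hA : A.Nonempty) (hB : B.Nonempty)
    (hdisj : Disjoint A B) (hunion : A ∪ B = D)
    (hfact₀ : ∀ D' ⊆ D, μ₀ D' = μ₀ (D' ∩ A) * μ₀ (D' ∩ B))
    (hfact₁ : ∀ D' ⊆ D, μ₁ D' = μ₁ (D' ∩ A) * μ₁ (D' ∩ B))
    (RR : Finset α → ℝ) (hRR : ∀ E, RR E = μ₁ E / μ₀ E)
    (a : Finset α → ℝ)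
    (ha : ∀ E, a E = ∑ E' ∈ E.powerset, (-1 : ℝ) ^ ((E \ E').card) * Real.log (RR E'))
    (MCE : Finset α → ℝ)
    (hMCE : ∀ E, MCE E = ∏ E' ∈ E.powerset.erase E, Real.exp (a E')) :
    RR D = MCE D := by
  have hRRpos : ∀ E, 0 < RR E := fun E => by
    rw [hRR]; exact div_pos (hpos₁ E) (hpos₀ E)
  -- Step 1: Möbius inversion gives ∑_{E'⊆D} a E' = log RR D
  have hsum : ∑ E' ∈ D.powerset, a E' = Real.log (RR D) := by
    have := aux_mobius (fun E => Real.log (RR E)) D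
    calc ∑ E' ∈ D.powerset, a E'
        = ∑ E' ∈ D.powerset, ∑ E'' ∈ E'.powerset,
            (-1 : ℝ) ^ ((E' \ E'').card) * Real.log (RR E'') :=
          Finset.sum_congr rfl fun E' _ => ha E'
      _ = Real.log (RR D) := this
  -- Step 2: a D = 0
  have haD : a D = 0 := by
    rw [ha]
    have hsep : ∀ E' ∈ D.powerset,
        Real.log (RR E') = Real.log (RR (E' ∩ A)) + Real.log (RR (E' ∩ B)) := by
      intro E' hE'
      rw [Finset.mem_powerset] at hE'
      rw [hRR, hRR, hRR, hfact₀ E' hE', hfact₁ E' hE']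
      rw [← div_mul_div_comm]
      rw [Real.log_mul (ne_of_gt (div_pos (hpos₁ _) (hpos₀ _)))
        (ne_of_gt (div_pos (hpos₁ _) (hpos₀ _)))]
    calc ∑ E' ∈ D.powerset, (-1 : ℝ) ^ ((D \ E').card) * Real.log (RR E')
        = ∑ E' ∈ D.powerset, (-1 : ℝ) ^ ((D \ E').card) *
            (Real.log (RR (E' ∩ A)) + Real.log (RR (E' ∩ B))) :=
          Finset.sum_congr rfl fun E' hE' => by rw [hsep E' hE']
      _ = 0 := by
          subst hunion
          exact aux_alpha_zero A B hA hB hdisj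
            (fun S => Real.log (RR S)) (fun T => Real.log (RR T))
  -- Step 3: assemble
  rw [hMCE]
  have hDmem : D ∈ D.powerset := Finset.mem_powerset_self D
  have : ∏ E' ∈ D.powerset.erase D, Real.exp (a E')
      = Real.exp (∑ E' ∈ D.powerset.erase D, a E') := by
    rw [Real.exp_sum]
  rw [this]
  have hsum' : ∑ E' ∈ D.powerset.erase D, a E' = Real.log (RR D) := by
    have := Finset.sum_erase_add D.powerset a hDmem
    rw [haD, add_zero] at this
    rw [this, hsum]
  rw [hsum', Real.exp_log (hRRpos D)]
end
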